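/- Given a family of wallspace structures on the cliques of a graph such that distances decompose: if w = g₁⋯g_n is a minimal-length expression of an element of a graph product ΓG with g_i in vertex group G_i, and each G_i carries a wall pseudo-metric d_i, then the function d(1, g₁⋯g_n) = Σ d_i(1, g_i) (extended equivariantly) defines a G-invariant pseudo-metric on ΓG satisfying the triangle inequality. -/

import Mathlib

/-- The commutation relators of a graph product: commutators of elements of vertex groups
joined by an edge of `Γ`. -/
def graphProductRels {ι : Type*} (Γ : SimpleGraph ι) (G : ι → Type*) [∀ i, Group (G i)] :
    Set (Monoid.CoprodI G) :=
  {x | ∃ (i j : ι) (g : G i) (h : G j), Γ.Adj i j ∧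
    x = Monoid.CoprodI.of g * Monoid.CoprodI.of h *
          (Monoid.CoprodI.of g)⁻¹ * (Monoid.CoprodI.of h)⁻¹}

/-- The graph product of the groups `G i` over the simplicial graph `Γ`: the quotient of
their free product by the normal closure of the commutation relators. -/
def GraphProduct {ι : Type*} (Γ : SimpleGraph ι) (G : ι → Type*) [∀ i, Group (G i)] :
    Type _ :=
  Monoid.CoprodI G ⧸ Subgroup.normalClosure (graphProductRels Γ G)

instance {ι : Type*} (Γ : SimpleGraph ι) (G : ι → Type*) [∀ i, Group (G i)] :
    Group (GraphProduct Γ G) :=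
  inferInstanceAs (Group (Monoid.CoprodI G ⧸ Subgroup.normalClosure (graphProductRels Γ G)))

/-- The canonical morphism from a vertex group into the graph product. -/
def GraphProduct.of {ι : Type*} {Γ : SimpleGraph ι} {G : ι → Type*} [∀ i, Group (G i)]
    {i : ι} : G i →* GraphProduct Γ G :=
  (QuotientGroup.mk' (Subgroup.normalClosure (graphProductRels Γ G))).comp Monoid.CoprodI.of

/-- The element of the graph product represented by a word: a list of syllables, each a
pair of a vertex and an element of the corresponding vertex group. -/
def wordProd {ι : Type*} (Γ : SimpleGraph ι) (G : ι → Type*) [∀ i, Group (G i)]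
    (L : List (Σ i, G i)) : GraphProduct Γ G :=
  (L.map fun p => GraphProduct.of (Γ := Γ) p.2).prod


namespace GPW

open scoped Classical

variable {ι : Type*} (Γ : SimpleGraph ι) (G : ι → Type*) [∀ i, Group (G i)]

inductive Step : List (Σ i, G i) → List (Σ i, G i) → Prop
  | swap (p q : Σ i, G i) (R : List (Σ i, G i)) (h : Γ.Adj p.1 q.1) :
      Step (p :: q :: R) (q :: p :: R)
  | cons (p : Σ i, G i) {L L' : List (Σ i, G i)} : Step L L' → Step (p :: L) (p :: L')

def SEquiv : List (Σ i, G i) → List (Σ i, G i) → Prop := Relation.EqvGen (Step Γ G)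

variable {Γ G}

theorem SEquiv.refl (L : List (Σ i, G i)) : SEquiv Γ G L L := Relation.EqvGen.refl L
theorem SEquiv.symm {L M : List (Σ i, G i)} (h : SEquiv Γ G L M) : SEquiv Γ G M L :=
  Relation.EqvGen.symm _ _ h
theorem SEquiv.trans {L M N : List (Σ i, G i)} (h : SEquiv Γ G L M) (h' : SEquiv Γ G M N) :
    SEquiv Γ G L N := Relation.EqvGen.trans _ _ _ h h'
theorem SEquiv.of_step {L M : List (Σ i, G i)} (h : Step Γ G L M) : SEquiv Γ G L M :=
  Relation.EqvGen.rel _ _ h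
theorem SEquiv.swap (p q : Σ i, G i) (R : List (Σ i, G i)) (h : Γ.Adj p.1 q.1) :
    SEquiv Γ G (p :: q :: R) (q :: p :: R) := SEquiv.of_step (Step.swap p q R h)
theorem SEquiv.cons (p : Σ i, G i) {L M : List (Σ i, G i)} (h : SEquiv Γ G L M) :
    SEquiv Γ G (p :: L) (p :: M) := by
  induction h with
  | rel _ _ h => exact SEquiv.of_step (Step.cons p h)
  | refl _ => exact SEquiv.refl _
  | symm _ _ _ ih => exact ih.symm
  | trans _ _ _ _ _ ih ih' => exact ih.trans ih'
theorem SEquiv.of_eq {L M : List (Σ i, G i)} (h : L = M) : SEquiv Γ G L M := h ▸ SEquiv.refl L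

variable (Γ G)

/-- The action of a letter on a word, by insertion/merging. -/
noncomputable def act (i : ι) (g : G i) : List (Σ i, G i) → List (Σ i, G i)
  | [] => [⟨i, g⟩]
  | ⟨j, a⟩ :: L =>
    if h : j = i then
      if g * (h ▸ a) = 1 then L else ⟨i, g * (h ▸ a)⟩ :: L
    else if Γ.Adj j i then ⟨j, a⟩ :: act i g L
    else ⟨i, g⟩ :: ⟨j, a⟩ :: L

/-- Whether a syllable with vertex `i` can be shuffled to the front. -/
def CanReach (i : ι) : List (Σ i, G i) → Prop
  | [] => False
  | p :: L => p.1 = i ∨ (Γ.Adj p.1 i ∧ CanReach i L)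

/-- Reduced (minimal-form) words. -/
def Reduced : List (Σ i, G i) → Prop
  | [] => True
  | p :: L => p.2 ≠ 1 ∧ ¬ CanReach Γ G p.1 L ∧ Reduced L

variable {Γ G}

@[simp] theorem act_nil (i : ι) (g : G i) : act Γ G i g [] = [⟨i, g⟩] := rfl

theorem act_cons_same (i : ι) (g a : G i) (L : List (Σ i, G i)) :
    act Γ G i g (⟨i, a⟩ :: L) = if g * a = 1 then L else ⟨i, g * a⟩ :: L := by
  simp [act]

theorem act_cons_adj {j i : ι} (h : j ≠ i) (hadj : Γ.Adj j i) (g : G i) (a : G j)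
    (L : List (Σ i, G i)) : act Γ G i g (⟨j, a⟩ :: L) = ⟨j, a⟩ :: act Γ G i g L := by
  simp [act, h, hadj]

theorem act_cons_far {j i : ι} (h : j ≠ i) (hadj : ¬ Γ.Adj j i) (g : G i) (a : G j)
    (L : List (Σ i, G i)) : act Γ G i g (⟨j, a⟩ :: L) = ⟨i, g⟩ :: ⟨j, a⟩ :: L := by
  simp [act, h, hadj]

@[simp] theorem canReach_nil (i : ι) : ¬ CanReach Γ G i [] := fun h => h

theorem canReach_cons (i : ι) (p : Σ i, G i) (L : List (Σ i, G i)) :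
    CanReach Γ G i (p :: L) ↔ p.1 = i ∨ (Γ.Adj p.1 i ∧ CanReach Γ G i L) := Iff.rfl

@[simp] theorem reduced_nil : Reduced Γ G ([] : List (Σ i, G i)) := trivial

theorem reduced_cons {p : Σ i, G i} {L : List (Σ i, G i)} :
    Reduced Γ G (p :: L) ↔ p.2 ≠ 1 ∧ ¬ CanReach Γ G p.1 L ∧ Reduced Γ G L := Iff.rfl

theorem act_ins {i : ι} {L : List (Σ i, G i)} (h : ¬ CanReach Γ G i L) (g : G i) :
    SEquiv Γ G (act Γ G i g L) (⟨i, g⟩ :: L) := by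
  induction L with
  | nil => exact SEquiv.refl _
  | cons p L ih =>
    obtain ⟨j, a⟩ := p
    rw [canReach_cons] at h
    push_neg at h
    by_cases hj : j = i
    · exact absurd hj h.1
    · by_cases hadj : Γ.Adj j i
      · rw [act_cons_adj hj hadj]
        exact (SEquiv.cons _ (ih (h.2 hadj))).trans (SEquiv.swap ⟨j, a⟩ ⟨i, g⟩ L hadj)
      · rw [act_cons_far hj hadj]
        exact SEquiv.refl _

theorem act_step {i : ι} (g : G i) {L L' : List (Σ i, G i)} (h : Step Γ G L L') :
    SEquiv Γ G (act Γ G i g L) (act Γ G i g L') := by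
  induction h with
  | swap p q R hadj =>
    obtain ⟨jp, ap⟩ := p
    obtain ⟨jq, aq⟩ := q
    have hne : jp ≠ jq := Γ.ne_of_adj hadj
    by_cases hp : jp = i
    · subst hp
      have hq : jq ≠ jp := hne.symm
      rw [act_cons_same, act_cons_adj hq (Γ.adj_symm hadj)]
      by_cases hc : g * ap = 1
      · rw [if_pos hc, act_cons_same, if_pos hc]
        exact SEquiv.refl _
      · rw [if_neg hc, act_cons_same, if_neg hc]
        exact SEquiv.swap _ _ _ hadj
    · by_cases hq : jq = i
      · subst hq
        rw [act_cons_adj hp hadj, act_cons_same, act_cons_same]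
        by_cases hc : g * aq = 1
        · rw [if_pos hc, if_pos hc]
          exact SEquiv.refl _
        · rw [if_neg hc, if_neg hc]
          exact SEquiv.swap _ _ _ hadj
      · by_cases hpa : Γ.Adj jp i <;> by_cases hqa : Γ.Adj jq i
        · simp only [act_cons_adj hp hpa, act_cons_adj hq hqa]
          exact SEquiv.swap _ _ _ hadj
        · simp only [act_cons_adj hp hpa, act_cons_far hq hqa]
          exact (SEquiv.swap ⟨jp, ap⟩ ⟨i, g⟩ _ hpa).trans
            (SEquiv.cons _ (SEquiv.swap _ _ _ hadj))
        · simp only [act_cons_far hp hpa, act_cons_adj hq hqa]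
          exact (SEquiv.cons _ (SEquiv.swap _ _ _ hadj)).trans
            (SEquiv.swap ⟨i, g⟩ ⟨jq, aq⟩ _ (Γ.adj_symm hqa))
        · simp only [act_cons_far hp hpa, act_cons_far hq hqa]
          exact SEquiv.cons _ (SEquiv.swap _ _ _ hadj)
  | cons p hstep ih =>
    obtain ⟨j, a⟩ := p
    by_cases hj : j = i
    · subst hj
      rw [act_cons_same, act_cons_same]
      by_cases hc : g * a = 1
      · rw [if_pos hc, if_pos hc]
        exact SEquiv.of_step hstep
      · rw [if_neg hc, if_neg hc]
        exact SEquiv.cons _ (SEquiv.of_step hstep)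
    · by_cases hadj : Γ.Adj j i
      · rw [act_cons_adj hj hadj, act_cons_adj hj hadj]
        exact SEquiv.cons _ ih
      · rw [act_cons_far hj hadj, act_cons_far hj hadj]
        exact SEquiv.cons _ (SEquiv.cons _ (SEquiv.of_step hstep))

theorem act_equiv {i : ι} (g : G i) {L L' : List (Σ i, G i)} (h : SEquiv Γ G L L') :
    SEquiv Γ G (act Γ G i g L) (act Γ G i g L') := by
  induction h with
  | rel _ _ h => exact act_step g h
  | refl _ => exact SEquiv.refl _
  | symm _ _ _ ih => exact ih.symm
  | trans _ _ _ _ _ ih ih' => exact ih.trans ih'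

theorem canReach_act {i j : ι} (hne : j ≠ i) (hadj : Γ.Adj j i) (g : G i)
    {L : List (Σ i, G i)} (h : CanReach Γ G j (act Γ G i g L)) : CanReach Γ G j L := by
  induction L with
  | nil =>
    rcases h with h | ⟨_, h⟩
    · exact absurd h.symm hne
    · exact absurd h (canReach_nil j)
  | cons p L ih =>
    obtain ⟨k, a⟩ := p
    by_cases hk : k = i
    · subst hk
      rw [act_cons_same] at h
      by_cases hc : g * a = 1
      · rw [if_pos hc] at h
        exact Or.inr ⟨Γ.adj_symm hadj, h⟩
      · rw [if_neg hc] at h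
        rcases h with h | ⟨_, h⟩
        · exact absurd h.symm hne
        · exact Or.inr ⟨Γ.adj_symm hadj, h⟩
    · by_cases hka : Γ.Adj k i
      · rw [act_cons_adj hk hka] at h
        rcases h with h | ⟨h1, h2⟩
        · exact Or.inl h
        · exact Or.inr ⟨h1, ih h2⟩
      · rw [act_cons_far hk hka] at h
        rcases h with h | ⟨_, h⟩
        · exact absurd h.symm hne
        · exact h

theorem act_reduced {i : ι} {g : G i} (hg : g ≠ 1) {L : List (Σ i, G i)}
    (hL : Reduced Γ G L) : Reduced Γ G (act Γ G i g L) := by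
  induction L with
  | nil => exact ⟨hg, canReach_nil i, trivial⟩
  | cons p L ih =>
    obtain ⟨k, a⟩ := p
    obtain ⟨ha, hcr, hL⟩ := hL
    by_cases hk : k = i
    · subst hk
      rw [act_cons_same]
      by_cases hc : g * a = 1
      · rw [if_pos hc]; exact hL
      · rw [if_neg hc]; exact ⟨hc, hcr, hL⟩
    · by_cases hka : Γ.Adj k i
      · rw [act_cons_adj hk hka]
        exact ⟨ha, fun h => hcr (canReach_act hk hka g h), ih hL⟩
      · rw [act_cons_far hk hka]
        refine ⟨hg, ?_, ha, hcr, hL⟩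
        rw [canReach_cons]
        push_neg
        exact ⟨fun h => hk h, fun h => absurd h hka⟩

theorem act_act {i : ι} {g g' : G i} (hg : g ≠ 1) (hg' : g' ≠ 1) {L : List (Σ i, G i)}
    (hL : Reduced Γ G L) :
    SEquiv Γ G (act Γ G i g (act Γ G i g' L))
      (if g * g' = 1 then L else act Γ G i (g * g') L) := by
  induction L with
  | nil =>
    rw [act_nil, act_cons_same]
    by_cases hc : g * g' = 1
    · rw [if_pos hc, if_pos hc]; exact SEquiv.refl _
    · rw [if_neg hc, if_neg hc, act_nil]; exact SEquiv.refl _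
  | cons p L ih =>
    obtain ⟨k, a⟩ := p
    obtain ⟨ha, hcr, hL⟩ := hL
    by_cases hk : k = i
    · subst hk
      rw [act_cons_same]
      by_cases hc1 : g' * a = 1
      · rw [if_pos hc1]
        by_cases hc : g * g' = 1
        · rw [if_pos hc]
          have hga : g = a := by
            rw [eq_inv_of_mul_eq_one_right hc1]
            exact eq_inv_of_mul_eq_one_left hc
          exact hga ▸ act_ins hcr g
        · rw [if_neg hc, act_cons_same]
          have h2 : g * g' * a = g := by
            rw [mul_assoc, hc1, mul_one]
          rw [h2, if_neg hg]
          exact act_ins hcr g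
      · rw [if_neg hc1, act_cons_same, ← mul_assoc]
        by_cases hc : g * g' = 1
        · rw [if_pos hc]
          have h2 : g * g' * a = a := by rw [hc, one_mul]
          rw [h2, if_neg ha]
          exact SEquiv.refl _
        · rw [if_neg hc, act_cons_same]
          exact SEquiv.refl _
    · by_cases hka : Γ.Adj k i
      · rw [act_cons_adj hk hka, act_cons_adj hk hka]
        by_cases hc : g * g' = 1
        · rw [if_pos hc]
          have := ih hL
          rw [if_pos hc] at this
          exact SEquiv.cons _ this
        · rw [if_neg hc, act_cons_adj hk hka]
          have := ih hL
          rw [if_neg hc] at this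
          exact SEquiv.cons _ this
      · rw [act_cons_far hk hka, act_cons_same]
        by_cases hc : g * g' = 1
        · rw [if_pos hc, if_pos hc]; exact SEquiv.refl _
        · rw [if_neg hc, if_neg hc, act_cons_far hk hka]; exact SEquiv.refl _

theorem act_comm {i j : ι} (hadj : Γ.Adj i j) (g : G i) (h : G j)
    (L : List (Σ i, G i)) :
    SEquiv Γ G (act Γ G i g (act Γ G j h L)) (act Γ G j h (act Γ G i g L)) := by
  have hij : i ≠ j := Γ.ne_of_adj hadj
  induction L with
  | nil =>
    rw [act_nil, act_nil, act_cons_adj hij.symm (Γ.adj_symm hadj), act_cons_adj hij hadj,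
      act_nil, act_nil]
    exact SEquiv.swap ⟨j, h⟩ ⟨i, g⟩ [] (Γ.adj_symm hadj)
  | cons p L ih =>
    obtain ⟨k, a⟩ := p
    by_cases hk : k = j
    · subst hk
      rw [act_cons_same, act_cons_adj hij.symm (Γ.adj_symm hadj), act_cons_same]
      by_cases hc : h * a = 1
      · rw [if_pos hc, if_pos hc]; exact SEquiv.refl _
      · rw [if_neg hc, if_neg hc, act_cons_adj hij.symm (Γ.adj_symm hadj)]
        exact SEquiv.refl _
    · by_cases hk' : k = i
      · subst hk'
        rw [act_cons_adj hk hadj, act_cons_same, act_cons_same]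
        by_cases hc : g * a = 1
        · rw [if_pos hc, if_pos hc]; exact SEquiv.refl _
        · rw [if_neg hc, if_neg hc, act_cons_adj hk hadj]
          exact SEquiv.refl _
      · by_cases hkj : Γ.Adj k j <;> by_cases hki : Γ.Adj k i
        · rw [act_cons_adj hk hkj, act_cons_adj hk' hki, act_cons_adj hk' hki,
            act_cons_adj hk hkj]
          exact SEquiv.cons _ ih
        · rw [act_cons_adj hk hkj, act_cons_far hk' hki, act_cons_far hk' hki,
            act_cons_adj hij hadj, act_cons_adj hk hkj]
          exact SEquiv.refl _
        · rw [act_cons_far hk hkj, act_cons_adj hij.symm (Γ.adj_symm hadj),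
            act_cons_adj hk' hki, act_cons_far hk hkj]
          exact SEquiv.refl _
        · rw [act_cons_far hk hkj, act_cons_adj hij.symm (Γ.adj_symm hadj),
            act_cons_far hk' hki, act_cons_adj hij hadj,
            act_cons_far hk hkj]
          exact SEquiv.swap ⟨j, h⟩ ⟨i, g⟩ _ (Γ.adj_symm hadj)
theorem of_commute {i j : ι} (hadj : Γ.Adj i j) (g : G i) (h : G j) :
    Commute (GraphProduct.of (Γ := Γ) g) (GraphProduct.of (Γ := Γ) h) := by
  rw [← commutatorElement_eq_one_iff_commute]
  have hmem := Subgroup.subset_normalClosure (s := graphProductRels Γ G)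
    ⟨i, j, g, h, hadj, rfl⟩
  have h1 : (QuotientGroup.mk' (Subgroup.normalClosure (graphProductRels Γ G)))
      (Monoid.CoprodI.of g * Monoid.CoprodI.of h * (Monoid.CoprodI.of g)⁻¹ *
        (Monoid.CoprodI.of h)⁻¹) = 1 := (QuotientGroup.eq_one_iff _).2 hmem
  rw [commutatorElement_def]
  exact h1

@[simp] theorem wordProd_nil : wordProd Γ G ([] : List (Σ i, G i)) = 1 := rfl

theorem wordProd_cons (p : Σ i, G i) (L : List (Σ i, G i)) :
    wordProd Γ G (p :: L) = GraphProduct.of (Γ := Γ) p.2 * wordProd Γ G L := by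
  simp [wordProd]

theorem wordProd_append (L M : List (Σ i, G i)) :
    wordProd Γ G (L ++ M) = wordProd Γ G L * wordProd Γ G M := by
  simp [wordProd]

theorem wordProd_act (i : ι) (g : G i) (L : List (Σ i, G i)) :
    wordProd Γ G (act Γ G i g L) = GraphProduct.of (Γ := Γ) g * wordProd Γ G L := by
  induction L with
  | nil => simp [wordProd]
  | cons p L ih =>
    obtain ⟨k, a⟩ := p
    by_cases hk : k = i
    · subst hk
      rw [act_cons_same]
      by_cases hc : g * a = 1
      · rw [if_pos hc, wordProd_cons, ← mul_assoc, ← map_mul, hc, map_one, one_mul]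
      · rw [if_neg hc, wordProd_cons, wordProd_cons]
        simp [map_mul, mul_assoc]
    · by_cases hka : Γ.Adj k i
      · rw [act_cons_adj hk hka, wordProd_cons, wordProd_cons, ih, ← mul_assoc,
          ← mul_assoc]
        congr 1
        exact (of_commute hka a g).eq
      · rw [act_cons_far hk hka, wordProd_cons, wordProd_cons]

theorem wordProd_step {L M : List (Σ i, G i)} (h : Step Γ G L M) :
    wordProd Γ G L = wordProd Γ G M := by
  induction h with
  | swap p q R hadj =>
    rw [wordProd_cons, wordProd_cons, wordProd_cons, wordProd_cons, ← mul_assoc,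
      ← mul_assoc, (of_commute hadj p.2 q.2).eq]
  | cons p _ ih => rw [wordProd_cons, wordProd_cons, ih]

theorem wordProd_equiv {L M : List (Σ i, G i)} (h : SEquiv Γ G L M) :
    wordProd Γ G L = wordProd Γ G M := by
  induction h with
  | rel _ _ h => exact wordProd_step h
  | refl _ => rfl
  | symm _ _ _ ih => exact ih.symm
  | trans _ _ _ _ _ ih ih' => exact ih.trans ih'

section Metric

variable (d : ∀ i, G i → G i → ℝ)

/-- Sum of syllable lengths of a word. -/
def wsum (L : List (Σ i, G i)) : ℝ := (L.map fun p => d p.1 1 p.2).sum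

@[simp] theorem wsum_nil : wsum (G := G) d [] = 0 := rfl

theorem wsum_cons (p : Σ i, G i) (L : List (Σ i, G i)) :
    wsum d (p :: L) = d p.1 1 p.2 + wsum d L := by simp [wsum]

theorem wsum_append (L M : List (Σ i, G i)) :
    wsum d (L ++ M) = wsum d L + wsum d M := by simp [wsum]

variable (hd0 : ∀ i (g : G i), d i g g = 0)
  (hdsymm : ∀ i (g h : G i), d i g h = d i h g)
  (hdtri : ∀ i (a b c : G i), d i a c ≤ d i a b + d i b c)
  (hdinv : ∀ i (k a b : G i), d i (k * a) (k * b) = d i a b)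

include hd0 hdsymm hdtri in
theorem d_nonneg (i : ι) (g : G i) : 0 ≤ d i 1 g := by
  have h1 := hdtri i 1 g 1
  rw [hd0] at h1
  rw [hdsymm i g 1] at h1
  linarith

include hdtri hdinv in
theorem d_submul (i : ι) (g a : G i) : d i 1 (g * a) ≤ d i 1 g + d i 1 a := by
  have h1 := hdtri i 1 g (g * a)
  have h2 : d i g (g * a) = d i 1 a := by
    have := hdinv i g 1 a
    rwa [mul_one] at this
  linarith

theorem len_act_le (i : ι) (g : G i) (L : List (Σ i, G i)) :
    (act Γ G i g L).length ≤ L.length + 1 := by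
  induction L with
  | nil => simp
  | cons p L ih =>
    obtain ⟨k, a⟩ := p
    by_cases hk : k = i
    · subst hk
      rw [act_cons_same]
      by_cases hc : g * a = 1
      · rw [if_pos hc]; simp; omega
      · rw [if_neg hc]; simp
    · by_cases hka : Γ.Adj k i
      · rw [act_cons_adj hk hka]
        simpa using ih
      · rw [act_cons_far hk hka]; simp

include hd0 hdsymm hdtri hdinv in
theorem wsum_act_le (i : ι) (g : G i) (L : List (Σ i, G i)) :
    wsum d (act Γ G i g L) ≤ d i 1 g + wsum d L := by
  induction L with
  | nil => simp [wsum]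
  | cons p L ih =>
    obtain ⟨k, a⟩ := p
    by_cases hk : k = i
    · subst hk
      rw [act_cons_same]
      by_cases hc : g * a = 1
      · rw [if_pos hc, wsum_cons]
        have := d_nonneg d hd0 hdsymm hdtri k g
        have := d_nonneg d hd0 hdsymm hdtri k a
        linarith
      · rw [if_neg hc, wsum_cons, wsum_cons]
        have := d_submul d hdtri hdinv k g a
        linarith
    · by_cases hka : Γ.Adj k i
      · rw [act_cons_adj hk hka, wsum_cons, wsum_cons]
        linarith
      · rw [act_cons_far hk hka, wsum_cons, wsum_cons]

theorem wsum_act_eq (i : ι) (g : G i) (L : List (Σ i, G i))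
    (hlen : (act Γ G i g L).length = L.length + 1) :
    wsum d (act Γ G i g L) = d i 1 g + wsum d L := by
  induction L with
  | nil => simp [wsum]
  | cons p L ih =>
    obtain ⟨k, a⟩ := p
    by_cases hk : k = i
    · subst hk
      rw [act_cons_same] at hlen ⊢
      by_cases hc : g * a = 1
      · rw [if_pos hc] at hlen
        simp at hlen
        omega
      · rw [if_neg hc] at hlen
        simp at hlen
    · by_cases hka : Γ.Adj k i
      · rw [act_cons_adj hk hka] at hlen ⊢
        simp only [List.length_cons] at hlen
        rw [wsum_cons, wsum_cons, ih (by omega)]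
        ring
      · rw [act_cons_far hk hka, wsum_cons, wsum_cons]

theorem len_equiv {L M : List (Σ i, G i)} (h : SEquiv Γ G L M) : L.length = M.length := by
  induction h with
  | rel _ _ h => induction h with
    | swap p q R hadj => simp
    | cons p _ ih => simpa using ih
  | refl _ => rfl
  | symm _ _ _ ih => exact ih.symm
  | trans _ _ _ _ _ ih ih' => exact ih.trans ih'

theorem wsum_equiv {L M : List (Σ i, G i)} (h : SEquiv Γ G L M) : wsum d L = wsum d M := by
  induction h with
  | rel _ _ h => induction h with
    | swap p q R hadj => rw [wsum_cons, wsum_cons, wsum_cons, wsum_cons]; ring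
    | cons p _ ih => rw [wsum_cons, wsum_cons, ih]
  | refl _ => rfl
  | symm _ _ _ ih => exact ih.symm
  | trans _ _ _ _ _ ih ih' => exact ih.trans ih'

end Metric

variable (Γ G)

/-- Normal form of a word, computed by acting letter by letter. -/
noncomputable def NF : List (Σ i, G i) → List (Σ i, G i)
  | [] => []
  | p :: L => if p.2 = 1 then NF L else act Γ G p.1 p.2 (NF L)

variable {Γ G}

theorem NF_reduced (L : List (Σ i, G i)) : Reduced Γ G (NF Γ G L) := by
  induction L with
  | nil => exact trivial
  | cons p L ih =>
    rw [NF]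
    by_cases hp : p.2 = 1
    · rw [if_pos hp]; exact ih
    · rw [if_neg hp]; exact act_reduced hp ih

theorem wordProd_NF (L : List (Σ i, G i)) : wordProd Γ G (NF Γ G L) = wordProd Γ G L := by
  induction L with
  | nil => rfl
  | cons p L ih =>
    rw [NF, wordProd_cons]
    by_cases hp : p.2 = 1
    · rw [if_pos hp, hp, map_one, one_mul, ih]
    · rw [if_neg hp, wordProd_act, ih]

theorem len_NF_le (L : List (Σ i, G i)) : (NF Γ G L).length ≤ L.length := by
  induction L with
  | nil => simp [NF]
  | cons p L ih =>
    rw [NF]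
    by_cases hp : p.2 = 1
    · rw [if_pos hp]; simpa using Nat.le_succ_of_le ih
    · rw [if_neg hp]
      calc (act Γ G p.1 p.2 (NF Γ G L)).length ≤ (NF Γ G L).length + 1 :=
            len_act_le p.1 p.2 _
        _ ≤ L.length + 1 := by omega
        _ = (p :: L).length := by simp

section Metric2
variable (d : ∀ i, G i → G i → ℝ)
  (hd0 : ∀ i (g : G i), d i g g = 0)
  (hdsymm : ∀ i (g h : G i), d i g h = d i h g)
  (hdtri : ∀ i (a b c : G i), d i a c ≤ d i a b + d i b c)
  (hdinv : ∀ i (k a b : G i), d i (k * a) (k * b) = d i a b)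

include hd0 hdsymm hdtri hdinv in
theorem wsum_NF_le (L : List (Σ i, G i)) : wsum d (NF Γ G L) ≤ wsum d L := by
  induction L with
  | nil => simp [NF]
  | cons p L ih =>
    rw [NF, wsum_cons]
    by_cases hp : p.2 = 1
    · rw [if_pos hp, hp, hd0]
      simpa using ih
    · rw [if_neg hp]
      calc wsum d (act Γ G p.1 p.2 (NF Γ G L)) ≤ d p.1 1 p.2 + wsum d (NF Γ G L) :=
            wsum_act_le d hd0 hdsymm hdtri hdinv p.1 p.2 _
        _ ≤ d p.1 1 p.2 + wsum d L := by linarith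

include hd0 hdsymm hdtri hdinv in
theorem wsum_NF_eq (L : List (Σ i, G i)) (hlen : (NF Γ G L).length = L.length) :
    wsum d (NF Γ G L) = wsum d L := by
  induction L with
  | nil => simp [NF]
  | cons p L ih =>
    rw [NF] at hlen ⊢
    by_cases hp : p.2 = 1
    · rw [if_pos hp] at hlen
      have := len_NF_le (Γ := Γ) L
      simp [List.length_cons] at hlen
      omega
    · rw [if_neg hp] at hlen ⊢
      have h1 : (act Γ G p.1 p.2 (NF Γ G L)).length ≤ (NF Γ G L).length + 1 :=
        len_act_le p.1 p.2 _
      have h2 := len_NF_le (Γ := Γ) L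
      simp only [List.length_cons] at hlen
      have h3 : (NF Γ G L).length = L.length := by omega
      have h4 : (act Γ G p.1 p.2 (NF Γ G L)).length = (NF Γ G L).length + 1 := by omega
      rw [wsum_cons, wsum_act_eq d p.1 p.2 _ h4, ih h3]

end Metric2

variable (Γ G)

/-- The setoid of reduced words up to shuffle equivalence. -/
def rwSetoid : Setoid {L : List (Σ i, G i) // Reduced Γ G L} :=
  ⟨fun L M => SEquiv Γ G L.1 M.1,
    ⟨fun _ => SEquiv.refl _, SEquiv.symm, SEquiv.trans⟩⟩

/-- Shuffle classes of reduced words. -/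
def RClass : Type _ := Quotient (rwSetoid Γ G)

/-- The action of a letter on reduced shuffle classes. -/
noncomputable def aQ (i : ι) (g : G i) : RClass Γ G → RClass Γ G :=
  Quotient.map (fun L => if hg : g = 1 then L else ⟨act Γ G i g L.1, act_reduced hg L.2⟩)
    (by
      intro L M h
      by_cases hg : g = 1
      · simpa [hg] using h
      · simp only [dif_neg hg]; exact act_equiv g h)

theorem aQ_one (i : ι) : aQ Γ G i 1 = id := by
  funext x
  induction x using Quotient.inductionOn with
  | h L => simp [aQ, Quotient.map_mk]; rfl

theorem aQ_mul (i : ι) (g g' : G i) :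
    aQ Γ G i (g * g') = aQ Γ G i g ∘ aQ Γ G i g' := by
  funext x
  induction x using Quotient.inductionOn with
  | h L =>
    by_cases hg' : g' = 1
    · subst hg'
      simp [aQ_one, mul_one]
    · by_cases hg : g = 1
      · subst hg
        simp [aQ_one, one_mul]
      · simp only [Function.comp_apply, aQ, Quotient.map_mk, dif_neg hg, dif_neg hg']
        by_cases hc : g * g' = 1
        · rw [dif_pos hc]
          refine Quotient.sound ?_
          have := act_act hg hg' L.2
          rw [if_pos hc] at this
          simp only [dif_neg hg, dif_neg hg']
          exact this.symm
        · rw [dif_neg hc]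
          refine Quotient.sound ?_
          have := act_act hg hg' L.2
          rw [if_neg hc] at this
          simp only [dif_neg hg, dif_neg hg']
          exact this.symm

/-- The permutation of reduced classes given by a vertex group element. -/
noncomputable def ePerm (i : ι) (g : G i) : Equiv.Perm (RClass Γ G) where
  toFun := aQ Γ G i g
  invFun := aQ Γ G i g⁻¹
  left_inv := fun x => by
    have h := congrFun (aQ_mul Γ G i g⁻¹ g) x
    rw [inv_mul_cancel, aQ_one] at h
    exact h.symm
  right_inv := fun x => by
    have h := congrFun (aQ_mul Γ G i g g⁻¹) x
    rw [mul_inv_cancel, aQ_one] at h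
    exact h.symm

/-- The homomorphism from a vertex group to permutations of reduced classes. -/
noncomputable def eHom (i : ι) : G i →* Equiv.Perm (RClass Γ G) where
  toFun := ePerm Γ G i
  map_one' := by
    ext x
    simp [ePerm, aQ_one]
  map_mul' := fun g g' => by
    ext x
    simp [ePerm, aQ_mul]

/-- The induced homomorphism from the free product. -/
noncomputable def bigPhi : Monoid.CoprodI G →* Equiv.Perm (RClass Γ G) :=
  Monoid.CoprodI.lift (eHom Γ G)

theorem rels_sub_ker : graphProductRels Γ G ⊆ (bigPhi Γ G).ker := by
  rintro x ⟨i, j, g, h, hadj, rfl⟩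
  have hij : i ≠ j := Γ.ne_of_adj hadj
  rw [SetLike.mem_coe, MonoidHom.mem_ker]
  simp only [map_mul, map_inv, bigPhi, Monoid.CoprodI.lift_of]
  have hcomm : eHom Γ G i g * eHom Γ G j h = eHom Γ G j h * eHom Γ G i g := by
    ext x
    induction x using Quotient.inductionOn with
    | h L =>
      simp only [Equiv.Perm.coe_mul, Function.comp_apply]
      show aQ Γ G i g (aQ Γ G j h (Quotient.mk (rwSetoid Γ G) L)) =
        aQ Γ G j h (aQ Γ G i g (Quotient.mk (rwSetoid Γ G) L))
      by_cases hg : g = 1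
      · rw [hg, aQ_one]; rfl
      · by_cases hh : h = 1
        · rw [hh, aQ_one]; rfl
        · simp only [aQ, Quotient.map_mk, dif_neg hg, dif_neg hh]
          exact Quotient.sound (act_comm hadj g h L.1)
  rw [hcomm]
  group

theorem normalClosure_le_ker :
    Subgroup.normalClosure (graphProductRels Γ G) ≤ (bigPhi Γ G).ker :=
  Subgroup.normalClosure_le_normal (rels_sub_ker Γ G)

/-- The induced homomorphism from the graph product. -/
noncomputable def bigPsi : GraphProduct Γ G →* Equiv.Perm (RClass Γ G) :=
  QuotientGroup.lift (Subgroup.normalClosure (graphProductRels Γ G)) (bigPhi Γ G)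
    (fun x hx => normalClosure_le_ker Γ G hx)

theorem bigPsi_of {i : ι} (g : G i) :
    bigPsi Γ G (GraphProduct.of (Γ := Γ) g) = eHom Γ G i g := by
  show bigPhi Γ G (Monoid.CoprodI.of g) = _
  rw [bigPhi, Monoid.CoprodI.lift_of]

variable {Γ G}

/-- The empty reduced class. -/
noncomputable def emptyClass : RClass Γ G := Quotient.mk _ ⟨[], trivial⟩

theorem bigPsi_word {L : List (Σ i, G i)} (hL : Reduced Γ G L) :
    bigPsi Γ G (wordProd Γ G L) emptyClass = Quotient.mk _ ⟨L, hL⟩ := by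
  induction L with
  | nil => simp [wordProd, emptyClass]; rfl
  | cons p L ih =>
    obtain ⟨hp1, hpcr, hL'⟩ := hL
    rw [wordProd_cons, map_mul]
    show (bigPsi Γ G (GraphProduct.of p.2)) ((bigPsi Γ G (wordProd Γ G L)) emptyClass) = _
    rw [ih hL', bigPsi_of]
    show aQ Γ G p.1 p.2 (Quotient.mk (rwSetoid Γ G) ⟨L, hL'⟩) =
      Quotient.mk (rwSetoid Γ G) ⟨p :: L, hp1, hpcr, hL'⟩
    simp only [aQ, Quotient.map_mk, dif_neg hp1]
    exact Quotient.sound (act_ins hpcr p.2)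

/-- Uniqueness of reduced words up to shuffles. -/
theorem reduced_unique {L M : List (Σ i, G i)} (hL : Reduced Γ G L) (hM : Reduced Γ G M)
    (h : wordProd Γ G L = wordProd Γ G M) : SEquiv Γ G L M := by
  have h1 := bigPsi_word hL
  have h2 := bigPsi_word hM
  rw [h, h2] at h1
  exact SEquiv.symm (Quotient.exact h1)

theorem exists_word (w : GraphProduct Γ G) : ∃ L : List (Σ i, G i), wordProd Γ G L = w := by
  obtain ⟨x, rfl⟩ := QuotientGroup.mk'_surjective (Subgroup.normalClosure (graphProductRels Γ G)) w
  induction x using Monoid.CoprodI.induction_on with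
  | one => exact ⟨[], by simp [wordProd]; rfl⟩
  | of i g => exact ⟨[⟨i, g⟩], by simp [wordProd]; rfl⟩
  | mul x y hx hy =>
    obtain ⟨Lx, hLx⟩ := hx
    obtain ⟨Ly, hLy⟩ := hy
    exact ⟨Lx ++ Ly, by rw [wordProd_append, hLx, hLy, map_mul]; rfl⟩

/-- Formal inverse of a word. -/
def invRev (L : List (Σ i, G i)) : List (Σ i, G i) :=
  (L.map fun p => ⟨p.1, p.2⁻¹⟩).reverse

theorem invRev_cons (p : Σ i, G i) (L : List (Σ i, G i)) :
    invRev (p :: L) = invRev L ++ [⟨p.1, p.2⁻¹⟩] := by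
  simp [invRev]

theorem wordProd_invRev (L : List (Σ i, G i)) :
    wordProd Γ G (invRev L) = (wordProd Γ G L)⁻¹ := by
  induction L with
  | nil => simp [invRev]
  | cons p L ih =>
    rw [invRev_cons, wordProd_append, ih, wordProd_cons (Γ := Γ) p L, mul_inv_rev,
      wordProd_cons, wordProd_nil, mul_one]
    dsimp only
    rw [map_inv]

theorem wsum_invRev (d : ∀ i, G i → G i → ℝ)
    (hdsymm : ∀ i (g h : G i), d i g h = d i h g)
    (hdinv : ∀ i (k a b : G i), d i (k * a) (k * b) = d i a b)
    (L : List (Σ i, G i)) : wsum d (invRev L) = wsum d L := by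
  have hinv : ∀ (i : ι) (g : G i), d i 1 g⁻¹ = d i 1 g := by
    intro i g
    have h := hdinv i g 1 g⁻¹
    rw [mul_one, mul_inv_cancel] at h
    rw [← h, hdsymm]
  induction L with
  | nil => simp [invRev]
  | cons p L ih =>
    rw [invRev_cons, wsum_append, ih, wsum_cons]
    simp only [wsum, List.map_cons, List.map_nil, List.sum_cons, List.sum_nil]
    rw [hinv]
    ring

end GPW

theorem graphProduct_wall_pseudometric {ι : Type*} [Fintype ι] (Γ : SimpleGraph ι)
    (G : ι → Type*) [∀ i, Group (G i)] (d : ∀ i, G i → G i → ℝ)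
    (hd0 : ∀ i (g : G i), d i g g = 0)
    (hdsymm : ∀ i (g h : G i), d i g h = d i h g)
    (hdtri : ∀ i (a b c : G i), d i a c ≤ d i a b + d i b c)
    (hdinv : ∀ i (k a b : G i), d i (k * a) (k * b) = d i a b) :
    ∃ D : GraphProduct Γ G → GraphProduct Γ G → ℝ,
      (∀ x, D x x = 0) ∧
      (∀ x y, D x y = D y x) ∧
      (∀ x y z, D x z ≤ D x y + D y z) ∧
      (∀ g x y, D (g * x) (g * y) = D x y) ∧
      (∀ L : List (Σ i, G i),
        (∀ L' : List (Σ i, G i), wordProd Γ G L' = wordProd Γ G L → L.length ≤ L'.length) →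
        D 1 (wordProd Γ G L) = (L.map fun p => d p.1 1 p.2).sum) := by
  classical
  have hrep : ∀ w : GraphProduct Γ G, ∃ L : List (Σ i, G i),
      GPW.Reduced Γ G L ∧ wordProd Γ G L = w := by
    intro w
    obtain ⟨L, hL⟩ := GPW.exists_word w
    exact ⟨GPW.NF Γ G L, GPW.NF_reduced L, by rw [GPW.wordProd_NF, hL]⟩
  choose R hR1 hR2 using hrep
  set Dv : GraphProduct Γ G → ℝ := fun w => GPW.wsum d (R w) with hDv
  have key1 : ∀ L : List (Σ i, G i), Dv (wordProd Γ G L) ≤ GPW.wsum d L := by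
    intro L
    have hequiv : GPW.SEquiv Γ G (R (wordProd Γ G L)) (GPW.NF Γ G L) :=
      GPW.reduced_unique (hR1 _) (GPW.NF_reduced L)
        (by rw [hR2, GPW.wordProd_NF])
    calc Dv (wordProd Γ G L) = GPW.wsum d (GPW.NF Γ G L) := GPW.wsum_equiv d hequiv
      _ ≤ GPW.wsum d L := GPW.wsum_NF_le d hd0 hdsymm hdtri hdinv L
  have key2 : ∀ L : List (Σ i, G i),
      (∀ L' : List (Σ i, G i), wordProd Γ G L' = wordProd Γ G L → L.length ≤ L'.length) →
      Dv (wordProd Γ G L) = GPW.wsum d L := by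
    intro L hmin
    have hlen : (GPW.NF Γ G L).length = L.length :=
      le_antisymm (GPW.len_NF_le L) (hmin _ (GPW.wordProd_NF L))
    have hequiv : GPW.SEquiv Γ G (R (wordProd Γ G L)) (GPW.NF Γ G L) :=
      GPW.reduced_unique (hR1 _) (GPW.NF_reduced L)
        (by rw [hR2, GPW.wordProd_NF])
    calc Dv (wordProd Γ G L) = GPW.wsum d (GPW.NF Γ G L) := GPW.wsum_equiv d hequiv
      _ = GPW.wsum d L := GPW.wsum_NF_eq d hd0 hdsymm hdtri hdinv L hlen
  have key0 : Dv 1 = 0 := by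
    have hequiv : GPW.SEquiv Γ G (R 1) ([] : List (Σ i, G i)) :=
      GPW.reduced_unique (hR1 1) GPW.reduced_nil (by rw [hR2, GPW.wordProd_nil])
    have := GPW.wsum_equiv d hequiv
    simpa using this
  have keyinv : ∀ w : GraphProduct Γ G, Dv w⁻¹ = Dv w := by
    have hle : ∀ w : GraphProduct Γ G, Dv w⁻¹ ≤ Dv w := by
      intro w
      have h1 : wordProd Γ G (GPW.invRev (R w)) = w⁻¹ := by
        rw [GPW.wordProd_invRev, hR2]
      calc Dv w⁻¹ = Dv (wordProd Γ G (GPW.invRev (R w))) := by rw [h1]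
        _ ≤ GPW.wsum d (GPW.invRev (R w)) := key1 _
        _ = GPW.wsum d (R w) := GPW.wsum_invRev d hdsymm hdinv (R w)
    intro w
    refine le_antisymm (hle w) ?_
    have := hle w⁻¹
    rwa [inv_inv] at this
  have keytri : ∀ u v : GraphProduct Γ G, Dv (u * v) ≤ Dv u + Dv v := by
    intro u v
    have h1 : wordProd Γ G (R u ++ R v) = u * v := by
      rw [GPW.wordProd_append, hR2, hR2]
    calc Dv (u * v) = Dv (wordProd Γ G (R u ++ R v)) := by rw [h1]
      _ ≤ GPW.wsum d (R u ++ R v) := key1 _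
      _ = Dv u + Dv v := GPW.wsum_append d (R u) (R v)
  refine ⟨fun x y => Dv (x⁻¹ * y), ?_, ?_, ?_, ?_, ?_⟩
  · intro x
    show Dv (x⁻¹ * x) = 0
    rw [inv_mul_cancel]
    exact key0
  · intro x y
    show Dv (x⁻¹ * y) = Dv (y⁻¹ * x)
    have h : (x⁻¹ * y)⁻¹ = y⁻¹ * x := by group
    rw [← keyinv (x⁻¹ * y), h]
  · intro x y z
    show Dv (x⁻¹ * z) ≤ Dv (x⁻¹ * y) + Dv (y⁻¹ * z)
    have h : x⁻¹ * z = (x⁻¹ * y) * (y⁻¹ * z) := by group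
    rw [h]
    exact keytri _ _
  · intro g x y
    show Dv ((g * x)⁻¹ * (g * y)) = Dv (x⁻¹ * y)
    have h : (g * x)⁻¹ * (g * y) = x⁻¹ * y := by group
    rw [h]
  · intro L hmin
    show Dv (1⁻¹ * wordProd Γ G L) = _
    rw [inv_one, one_mul]
    exact key2 L hmin
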